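/- Let q be a prime power and let n, m be positive integers and ρ, t nonnegative integers. Let C ⊆ Fq^{n×m} be a set of matrices. Then the fan-out sets Y^{ρ,t}_{x}, x ∈ C, are pairwise disjoint (i.e., Y^{ρ,t}_{x₁} ∩ Y^{ρ,t}_{x₂} = ∅ for all distinct x₁, x₂ ∈ C) if and only if rank(x₁ − x₂) > 2t + ρ for all distinct x₁, x₂ ∈ C. -/

import Mathlib

set_option autoImplicit false

open Matrix

/-- The fan-out set `Y^{ρ,t}_x`: all pairs `(A, y)` with `rank A ≥ n - ρ` and
`y = A·x + Z` for some `Z` with `rank Z ≤ t`. -/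
def fanOut {F : Type*} [Field F] [Fintype F] {n m : ℕ} (ρ t : ℕ)
    (x : Matrix (Fin n) (Fin m) F) :
    Set (Matrix (Fin n) (Fin n) F × Matrix (Fin n) (Fin m) F) :=
  {p | n - ρ ≤ p.1.rank ∧ ∃ Z : Matrix (Fin n) (Fin m) F, Z.rank ≤ t ∧ p.2 = p.1 * x + Z}

section Aux

variable {K V W : Type*} [Field K] [AddCommGroup V] [Module K V]
  [AddCommGroup W] [Module K W]

/-- Rank-nullity for the restriction of a linear map to a submodule. -/
lemma aux_finrank_map_add_inf_ker [FiniteDimensional K V]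
    (f : V →ₗ[K] W) (p : Submodule K V) :
    Module.finrank K (p.map f) + Module.finrank K ↥(LinearMap.ker f ⊓ p)
      = Module.finrank K p := by
  have h := LinearMap.finrank_range_add_finrank_ker (f.domRestrict p)
  rw [LinearMap.range_domRestrict] at h
  have hker : LinearMap.ker (f.domRestrict p)
      = (LinearMap.ker f ⊓ p).comap p.subtype := by
    ext ⟨x, hx⟩
    simp [LinearMap.mem_ker, hx]
  rw [hker] at h
  rwa [(Submodule.comapSubtypeEquivOfLe (inf_le_right :
      LinearMap.ker f ⊓ p ≤ p)).finrank_eq] at h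

/-- Every finite-dimensional submodule contains a submodule of any smaller dimension. -/
lemma aux_exists_le_finrank_eq [FiniteDimensional K V]
    (p : Submodule K V) (k : ℕ) (hk : k ≤ Module.finrank K p) :
    ∃ q : Submodule K V, q ≤ p ∧ Module.finrank K q = k := by
  classical
  let b := Module.finBasis K p
  let v : Fin k → V := fun i => (b (Fin.castLE hk i) : V)
  have hli : LinearIndependent K v := by
    have h1 : LinearIndependent K (fun i => ((b i : ↥p) : V)) :=
      b.linearIndependent.map' p.subtype p.ker_subtype
    exact h1.comp (Fin.castLE hk) (Fin.castLE_injective hk)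
  refine ⟨Submodule.span K (Set.range v), ?_, ?_⟩
  · rw [Submodule.span_le]
    rintro _ ⟨i, rfl⟩
    exact (b (Fin.castLE hk i)).2
  · rw [finrank_span_eq_card hli, Fintype.card_fin]

lemma aux_mulVecLin_toMatrix' {R : Type*} [CommSemiring R] {n m : ℕ}
    (f : (Fin n → R) →ₗ[R] Fin m → R) :
    (LinearMap.toMatrix' f).mulVecLin = f := by
  rw [← Matrix.toLin'_apply', Matrix.toLin'_toMatrix']

lemma aux_range_add_le {f g : V →ₗ[K] W} :
    LinearMap.range (f + g) ≤ LinearMap.range f ⊔ LinearMap.range g := by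
  rintro _ ⟨x, rfl⟩
  exact Submodule.add_mem_sup ⟨x, rfl⟩ ⟨x, rfl⟩

lemma aux_rank_neg {n m : ℕ} (M : Matrix (Fin n) (Fin m) K) :
    (-M).rank = M.rank := by
  have h : (-M).mulVecLin = -(M.mulVecLin) := by
    ext v i; simp [Matrix.neg_mulVec]
  rw [Matrix.rank, Matrix.rank, h, LinearMap.range_neg]

lemma aux_rank_add_le {n m : ℕ} (M N : Matrix (Fin n) (Fin m) K) :
    (M + N).rank ≤ M.rank + N.rank := by
  rw [Matrix.rank, Matrix.mulVecLin_add]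
  exact le_trans (Submodule.finrank_mono aux_range_add_le)
    (Submodule.finrank_add_le_finrank_add_finrank _ _)

/-- Sylvester-type lower bound: multiplying by a matrix of rank at least `n - ρ`
decreases the rank by at most `ρ`. -/
lemma aux_rank_le_rank_mul_add {n m ρ : ℕ} (A : Matrix (Fin n) (Fin n) K)
    (d : Matrix (Fin n) (Fin m) K) (hA : n - ρ ≤ A.rank) :
    d.rank ≤ (A * d).rank + ρ := by
  set f := A.mulVecLin with hf
  set p := LinearMap.range d.mulVecLin with hp
  have h1 := aux_finrank_map_add_inf_ker f p
  have h2 : (A * d).rank = Module.finrank K (p.map f) := by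
    rw [Matrix.rank, Matrix.mulVecLin_mul, LinearMap.range_comp]
  have h3 : Module.finrank K ↥(LinearMap.ker f ⊓ p)
      ≤ Module.finrank K ↥(LinearMap.ker f) :=
    Submodule.finrank_mono inf_le_left
  have h4 := LinearMap.finrank_range_add_finrank_ker f
  rw [Module.finrank_fin_fun] at h4
  have h5 : d.rank = Module.finrank K p := rfl
  have h6 : A.rank = Module.finrank K (LinearMap.range f) := rfl
  omega

end Aux

/-- A deterministic encoder with codebook `C` is universally `t`-error-`ρ`-erasure-correcting
(i.e., the fan-out sets of the codewords are pairwise disjoint) if and only if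
`rank (x₁ - x₂) > 2t + ρ` for all distinct codewords `x₁, x₂ ∈ C`. -/
theorem fanOut_pairwise_disjoint_iff_rank_dist_gt
    (q : ℕ) (hq : IsPrimePow q) (n m : ℕ) (hn : 0 < n) (hm : 0 < m) (ρ t : ℕ)
    (F : Type) [Field F] [Fintype F] (hF : Fintype.card F = q)
    (C : Set (Matrix (Fin n) (Fin m) F)) :
    (∀ x₁ ∈ C, ∀ x₂ ∈ C, x₁ ≠ x₂ → fanOut ρ t x₁ ∩ fanOut ρ t x₂ = ∅) ↔
      (∀ x₁ ∈ C, ∀ x₂ ∈ C, x₁ ≠ x₂ → 2 * t + ρ < (x₁ - x₂).rank) := by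
  constructor
  · -- disjointness → rank distance large
    intro hdisj x₁ h1 x₂ h2 hne
    by_contra hc
    push_neg at hc
    set d : Matrix (Fin n) (Fin m) F := x₁ - x₂ with hd
    -- construct a common element of the two fan-out sets
    set p : Submodule F (Fin n → F) := LinearMap.range d.mulVecLin with hp
    have hdr : d.rank = Module.finrank F p := rfl
    -- a subspace of the column space of d of dimension min ρ (rank d)
    obtain ⟨Ksub, hKle, hKrank⟩ :=
      aux_exists_le_finrank_eq p (min ρ d.rank) (by rw [← hdr]; exact min_le_right _ _)
    obtain ⟨Wc, hWc⟩ := Submodule.exists_isCompl Ksub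
    set π : (Fin n → F) →ₗ[F] Fin n → F :=
      Wc.subtype ∘ₗ Submodule.projectionOnto Wc Ksub hWc.symm with hπdef
    set A : Matrix (Fin n) (Fin n) F := LinearMap.toMatrix' π with hA
    have hπ : A.mulVecLin = π := aux_mulVecLin_toMatrix' π
    have hkerπ : LinearMap.ker π = Ksub := by
      ext x
      simp [hπdef, LinearMap.mem_ker, Submodule.coe_eq_zero,
        Submodule.linearProjOfIsCompl_apply_eq_zero_iff]
    have hrangeπ : LinearMap.range π = Wc := by
      rw [hπdef, LinearMap.range_comp, Submodule.linearProjOfIsCompl_range,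
        Submodule.map_top, Submodule.range_subtype]
    -- rank of A
    have hfinsum : Module.finrank F Ksub + Module.finrank F Wc = n := by
      have := Submodule.finrank_add_eq_of_isCompl hWc
      rwa [Module.finrank_fin_fun] at this
    have hArank : A.rank = n - min ρ d.rank := by
      rw [Matrix.rank, hπ, hrangeπ]
      omega
    have hArank' : n - ρ ≤ A.rank := by rw [hArank]; omega
    -- rank of M = A * d
    set M : Matrix (Fin n) (Fin m) F := A * d with hM
    have hMrank : M.rank + min ρ d.rank = d.rank := by
      have h1 := aux_finrank_map_add_inf_ker π p
      have h2 : M.rank = Module.finrank F (p.map π) := by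
        rw [hM, Matrix.rank, Matrix.mulVecLin_mul, hπ, LinearMap.range_comp]
      have h3 : LinearMap.ker π ⊓ p = Ksub := by
        rw [hkerπ, inf_eq_left.2 hKle]
      rw [h2, hdr]
      rw [h3, hKrank] at h1
      exact h1
    have hMle : M.rank ≤ 2 * t := by omega
    -- split M into two matrices of rank at most t
    set p2 : Submodule F (Fin n → F) := LinearMap.range M.mulVecLin with hp2
    have hp2r : M.rank = Module.finrank F p2 := rfl
    obtain ⟨V₁, hV₁le, hV₁rank⟩ :=
      aux_exists_le_finrank_eq p2 (min t M.rank) (by rw [← hp2r]; exact min_le_right _ _)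
    obtain ⟨W₁, hW₁⟩ := Submodule.exists_isCompl V₁
    set π₁ : (Fin n → F) →ₗ[F] Fin n → F :=
      V₁.subtype ∘ₗ Submodule.projectionOnto V₁ W₁ hW₁ with hπ₁def
    set Z₁ : Matrix (Fin n) (Fin m) F := LinearMap.toMatrix' (π₁ ∘ₗ M.mulVecLin) with hZ₁
    set Z₂ : Matrix (Fin n) (Fin m) F :=
      LinearMap.toMatrix' ((LinearMap.id - π₁) ∘ₗ M.mulVecLin) with hZ₂
    have hsum : Z₁ + Z₂ = M := by
      rw [hZ₁, hZ₂, ← map_add, ← LinearMap.add_comp, add_sub_cancel,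
        LinearMap.id_comp, ← Matrix.toLin'_apply', LinearMap.toMatrix'_toLin']
    have hZ₁rank : Z₁.rank ≤ t := by
      have hr : LinearMap.range ((LinearMap.toMatrix' (π₁ ∘ₗ M.mulVecLin)).mulVecLin) ≤ V₁ := by
        rw [aux_mulVecLin_toMatrix']
        refine le_trans (LinearMap.range_comp_le_range _ _) ?_
        rw [hπ₁def, LinearMap.range_comp, Submodule.linearProjOfIsCompl_range,
          Submodule.map_top, Submodule.range_subtype]
      calc Z₁.rank ≤ Module.finrank F V₁ := Submodule.finrank_mono hr
        _ ≤ t := by rw [hV₁rank]; omega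
    have hZ₂rank : Z₂.rank ≤ t := by
      have hr : Z₂.rank = Module.finrank F (p2.map (LinearMap.id - π₁)) := by
        rw [hZ₂, Matrix.rank, aux_mulVecLin_toMatrix', LinearMap.range_comp]
      have h1 := aux_finrank_map_add_inf_ker (LinearMap.id - π₁) p2
      have hVker : V₁ ≤ LinearMap.ker (LinearMap.id - π₁) ⊓ p2 := by
        refine le_inf ?_ hV₁le
        intro x hx
        have : π₁ x = x := by
          have := Submodule.linearProjOfIsCompl_apply_left hW₁ ⟨x, hx⟩
          simpa [hπ₁def] using congrArg (Submodule.subtype V₁) this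
        simp [LinearMap.mem_ker, LinearMap.sub_apply, this]
      have h2 : min t M.rank ≤
          Module.finrank F ↥(LinearMap.ker (LinearMap.id - π₁) ⊓ p2) := by
        rw [← hV₁rank]; exact Submodule.finrank_mono hVker
      rw [← hp2r] at h1
      omega
    -- the common element
    set y : Matrix (Fin n) (Fin m) F := A * x₁ + (-Z₁) with hy
    have hmem1 : (A, y) ∈ fanOut ρ t x₁ :=
      ⟨hArank', -Z₁, by rw [aux_rank_neg]; exact hZ₁rank, rfl⟩
    have hmem2 : (A, y) ∈ fanOut ρ t x₂ := by
      refine ⟨hArank', Z₂, hZ₂rank, ?_⟩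
      have hZ₂eq : Z₂ = A * x₁ - A * x₂ - Z₁ := by
        have : Z₁ + Z₂ = A * x₁ - A * x₂ := by rw [hsum, hM, hd, Matrix.mul_sub]
        rw [← this]; abel
      rw [hy, hZ₂eq]; abel
    have := hdisj x₁ h1 x₂ h2 hne
    rw [Set.eq_empty_iff_forall_notMem] at this
    exact this (A, y) ⟨hmem1, hmem2⟩
  · -- rank distance large → disjointness
    intro hrank x₁ h1 x₂ h2 hne
    rw [Set.eq_empty_iff_forall_notMem]
    rintro ⟨A, y⟩ ⟨⟨hA1, Z₁, hZ₁, hy1⟩, ⟨hA2, Z₂, hZ₂, hy2⟩⟩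
    have he : A * x₁ + Z₁ = A * x₂ + Z₂ := hy1.symm.trans hy2
    have hMeq : A * (x₁ - x₂) = Z₂ - Z₁ := by
      rw [Matrix.mul_sub, sub_eq_sub_iff_add_eq_add, add_comm Z₂ (A * x₂)]
      exact he
    have hMr : (A * (x₁ - x₂)).rank ≤ 2 * t := by
      rw [hMeq, sub_eq_add_neg]
      calc (Z₂ + -Z₁).rank ≤ Z₂.rank + (-Z₁).rank := aux_rank_add_le _ _
        _ ≤ t + t := by rw [aux_rank_neg]; exact Nat.add_le_add hZ₂ hZ₁
        _ = 2 * t := by omega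
    have hkey := aux_rank_le_rank_mul_add A (x₁ - x₂) hA1
    have := hrank x₁ h1 x₂ h2 hne
    omega
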